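/- Fix L ≥ 1, λ > 0 and T_1,…,T_L > 0. Let π_0 = 1/(1 + Σ_{j=1}^{L} e^{λ T_j} ∏_{s=1}^{j−1}(e^{λ T_s} − 1)) and π_l = π_0 e^{λ T_l} ∏_{s=1}^{l−1}(e^{λ T_s} − 1) for l = 1,…,L, and let E_0 = 1/λ and E_l = (1 − e^{−λ T_l})/λ for l = 1,…,L. Then for each l ∈ {1,…,L}, the time-average occupancy h_l = π_l E_l / (Σ_{k=0}^{L} π_k E_k) satisfies h_l = ∏_{j=1}^{l}(e^{λ T_j} − 1) / (1 + Σ_{k=1}^{L} ∏_{j=1}^{k}(e^{λ T_j} − 1)); in particular h_1 = (e^{λ T_1} − 1)/(1 + Σ_{j=1}^{L} ∏_{s=1}^{j}(e^{λ T_s} − 1)) and h_l = h_{l−1}·(e^{λ T_l} − 1) for l = 2,…,L. -/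

import Mathlib

/-- Time-average occupancies of the MCDP chain give the hit probabilities (6):
with the stationary distribution `π` of the embedded chain, mean sojourn times
`E_0 = 1/λ`, `E_l = (1-e^{-λT_l})/λ`, the time-average occupancy
`h_l = π_l E_l / ∑_{k=0}^{L} π_k E_k` equals
`∏_{j=1}^{l}(e^{λT_j}-1) / (1 + ∑_{k=1}^{L}∏_{j=1}^{k}(e^{λT_j}-1))`;
in particular `h_1 = (e^{λT_1}-1)/(1 + ∑_{j=1}^{L}∏_{s=1}^{j}(e^{λT_s}-1))`
and `h_l = h_{l-1}(e^{λT_l}-1)` for `l = 2, …, L`. -/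
theorem stmt_12 (L : ℕ) (hL : 1 ≤ L) (lam : ℝ) (hlam : 0 < lam)
    (T : ℕ → ℝ) (hT : ∀ j, 1 ≤ j → j ≤ L → 0 < T j)
    (π E h : ℕ → ℝ)
    (hπ0 : π 0 = 1 / (1 + ∑ j ∈ Finset.Icc 1 L, Real.exp (lam * T j) *
        ∏ s ∈ Finset.Icc 1 (j - 1), (Real.exp (lam * T s) - 1)))
    (hπ : ∀ l, 1 ≤ l → l ≤ L → π l = π 0 * Real.exp (lam * T l) *
        ∏ s ∈ Finset.Icc 1 (l - 1), (Real.exp (lam * T s) - 1))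
    (hE0 : E 0 = 1 / lam)
    (hE : ∀ l, 1 ≤ l → l ≤ L → E l = (1 - Real.exp (-(lam * T l))) / lam)
    (hh : ∀ l, 1 ≤ l → l ≤ L →
        h l = π l * E l / (∑ k ∈ Finset.range (L + 1), π k * E k)) :
    (∀ l, 1 ≤ l → l ≤ L →
      h l = (∏ j ∈ Finset.Icc 1 l, (Real.exp (lam * T j) - 1)) /
        (1 + ∑ k ∈ Finset.Icc 1 L, ∏ j ∈ Finset.Icc 1 k,
          (Real.exp (lam * T j) - 1))) ∧
    (h 1 = (Real.exp (lam * T 1) - 1) /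
        (1 + ∑ j ∈ Finset.Icc 1 L, ∏ s ∈ Finset.Icc 1 j,
          (Real.exp (lam * T s) - 1))) ∧
    (∀ l, 2 ≤ l → l ≤ L → h l = h (l - 1) * (Real.exp (lam * T l) - 1)) := by
  have hfpos : ∀ j, 1 ≤ j → j ≤ L → 0 < Real.exp (lam * T j) - 1 := by
    intro j h1 h2
    have hx : 0 < lam * T j := mul_pos hlam (hT j h1 h2)
    linarith [Real.add_one_le_exp (lam * T j), Real.exp_pos (lam * T j)]
  have hprodpos : ∀ m, m ≤ L → 0 < ∏ j ∈ Finset.Icc 1 m, (Real.exp (lam * T j) - 1) := by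
    intro m hm
    apply Finset.prod_pos
    intro j hj
    rw [Finset.mem_Icc] at hj
    exact hfpos j hj.1 (le_trans hj.2 hm)
  -- π 0 > 0
  have hBpos : 0 < 1 + ∑ j ∈ Finset.Icc 1 L, Real.exp (lam * T j) *
      ∏ s ∈ Finset.Icc 1 (j - 1), (Real.exp (lam * T s) - 1) := by
    have : 0 ≤ ∑ j ∈ Finset.Icc 1 L, Real.exp (lam * T j) *
        ∏ s ∈ Finset.Icc 1 (j - 1), (Real.exp (lam * T s) - 1) := by
      apply Finset.sum_nonneg
      intro j hj
      rw [Finset.mem_Icc] at hj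
      exact le_of_lt (mul_pos (Real.exp_pos _)
        (hprodpos (j - 1) (by omega)))
    linarith
  have hπ0pos : 0 < π 0 := by rw [hπ0]; positivity
  have hc : π 0 / lam ≠ 0 := ne_of_gt (div_pos hπ0pos hlam)
  -- key product formula
  have key : ∀ l, 1 ≤ l → l ≤ L → π l * E l =
      π 0 / lam * ∏ j ∈ Finset.Icc 1 l, (Real.exp (lam * T j) - 1) := by
    intro l h1 h2
    obtain ⟨m, rfl⟩ : ∃ m, l = m + 1 := ⟨l - 1, by omega⟩
    rw [hπ _ h1 h2, hE _ h1 h2,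
      Finset.prod_Icc_succ_top (by omega : 1 ≤ m + 1)]
    have hexp : Real.exp (lam * T (m + 1)) * (1 - Real.exp (-(lam * T (m + 1)))) =
        Real.exp (lam * T (m + 1)) - 1 := by
      rw [mul_sub, mul_one, ← Real.exp_add]
      simp
    have hm1 : m + 1 - 1 = m := rfl
    rw [hm1]
    field_simp
    linear_combination (∏ s ∈ Finset.Icc 1 m, (Real.exp (lam * T s) - 1)) * hexp
  -- sum formula
  have hins : Finset.range (L + 1) = insert 0 (Finset.Icc 1 L) := by
    ext x
    simp only [Finset.mem_range, Finset.mem_insert, Finset.mem_Icc]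
    omega
  have hsum : ∑ k ∈ Finset.range (L + 1), π k * E k =
      π 0 / lam * (1 + ∑ k ∈ Finset.Icc 1 L,
        ∏ j ∈ Finset.Icc 1 k, (Real.exp (lam * T j) - 1)) := by
    rw [hins, Finset.sum_insert (by simp), hE0,
      Finset.sum_congr rfl (fun k hk => key k (Finset.mem_Icc.mp hk).1 (Finset.mem_Icc.mp hk).2),
      mul_add, mul_one, ← Finset.mul_sum]
    ring
  have claim1 : ∀ l, 1 ≤ l → l ≤ L →
      h l = (∏ j ∈ Finset.Icc 1 l, (Real.exp (lam * T j) - 1)) /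
        (1 + ∑ k ∈ Finset.Icc 1 L, ∏ j ∈ Finset.Icc 1 k,
          (Real.exp (lam * T j) - 1)) := by
    intro l h1 h2
    rw [hh l h1 h2, key l h1 h2, hsum, mul_div_mul_left _ _ hc]
  refine ⟨claim1, ?_, ?_⟩
  · have := claim1 1 le_rfl hL
    simpa [Finset.Icc_self] using this
  · intro l h2 hLl
    rw [claim1 l (by omega) hLl, claim1 (l - 1) (by omega) (by omega)]
    obtain ⟨m, rfl⟩ : ∃ m, l = m + 1 := ⟨l - 1, by omega⟩
    have hm1 : m + 1 - 1 = m := rfl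
    rw [hm1, Finset.prod_Icc_succ_top (by omega : 1 ≤ m + 1)]
    ring
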